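/- Let the strategy profile (M, r) of the Mafia Hitting Set Game be a pure Nash equilibrium. Then M is a hitting set (M ∩ S ≠ ∅ for every S ∈ 𝓔) and ∑_{v∈M} c(v) ≤ d·∑_{v∈M*} c(v) for every hitting set M*; that is, the price of anarchy of the Mafia Hitting Set Game is at most d. -/

import Mathlib

open Finset
open scoped Classical

namespace MafiaHS

variable {V : Type*} [Fintype V] [DecidableEq V]

noncomputable section

/-- The demand `D(v) = (1/(d-1)) ∑_{S ∋ v} ∑_{m ∈ (M∩S)∖{v}} r(m,S)` asked from agent `v`
in the Mafia Hitting Set Game. -/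
def demand (d : ℕ) (E : Finset (Finset V)) (M : Finset V)
    (r : V → Finset V → ℝ) (v : V) : ℝ :=
  (1 / ((d : ℝ) - 1)) * ∑ S ∈ E.filter (fun S => v ∈ S), ∑ m ∈ (M ∩ S).erase v, r m S

/-- A valid strategy profile of the Mafia Hitting Set Game: ransoms are nonnegative,
`r m S = 0` unless `m` is a mafioso belonging to the club `S ∈ 𝓔`, and every mafioso `m`
distributes exactly `c m` among the clubs containing him. -/
def ValidProfile (E : Finset (Finset V)) (c : V → ℝ)
    (M : Finset V) (r : V → Finset V → ℝ) : Prop :=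
  (∀ m S, 0 ≤ r m S) ∧
  (∀ m S, m ∉ M ∨ m ∉ S ∨ S ∉ E → r m S = 0) ∧
  (∀ m ∈ M, ∑ S ∈ E.filter (fun S => m ∈ S), r m S = c m)

/-- Utility of agent `v` in the Mafia Hitting Set Game.  A mafioso gets
`-c v + F⁺(v) - F⁻(v)` with `F⁻(v) = min(D v, c v)` and
`F⁺(v) = ∑_{S ∋ v} (r(v,S)/(d-1))·(|S∖(P∪{v})| + ∑_{u∈(S∩P)∖{v}} c u / D u)`,
where `P = {u ∈ M : D u > c u}` is the set of protected mafiosi.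
A civilian gets `-D v` minus the penalty `T` if he belongs to an uncovered club. -/
def utility (d : ℕ) (E : Finset (Finset V)) (c : V → ℝ) (T : ℝ)
    (M : Finset V) (r : V → Finset V → ℝ) (v : V) : ℝ :=
  if v ∈ M then
    -c v +
      (∑ S ∈ E.filter (fun S => v ∈ S),
        (r v S / ((d : ℝ) - 1)) *
          ((((S.filter fun u => ¬(u ∈ M ∧ c u < demand d E M r u)).erase v).card : ℝ) +
            ∑ u ∈ (S.filter fun u => u ∈ M ∧ c u < demand d E M r u).erase v,
              c u / demand d E M r u)) -
      min (demand d E M r v) (c v)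
  else
    -demand d E M r v - (if ∃ S ∈ E, v ∈ S ∧ M ∩ S = ∅ then T else 0)

/-- `(M', r')` is a unilateral deviation of agent `v` from `(M, r)`:
all other agents keep their strategies. -/
def Deviation (v : V) (M M' : Finset V) (r r' : V → Finset V → ℝ) : Prop :=
  (∀ u, u ≠ v → (u ∈ M' ↔ u ∈ M)) ∧ ∀ u S, u ≠ v → r' u S = r u S

/-- `(M, r)` is a pure Nash equilibrium of the Mafia Hitting Set Game: a valid profile such
that no agent can strictly increase his utility by a unilateral deviation. -/
def IsNashEq (d : ℕ) (E : Finset (Finset V)) (c : V → ℝ) (T : ℝ)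
    (M : Finset V) (r : V → Finset V → ℝ) : Prop :=
  ValidProfile E c M r ∧
  ∀ (v : V) (M' : Finset V) (r' : V → Finset V → ℝ),
    ValidProfile E c M' r' → Deviation v M M' r r' →
      utility d E c T M' r' v ≤ utility d E c T M r v

set_option linter.unusedSectionVars false

def theta (d : ℕ) (E : Finset (Finset V)) (c : V → ℝ) (M : Finset V)
    (r : V → Finset V → ℝ) (u : V) : ℝ :=
  if u ∈ M ∧ c u < demand d E M r u then c u / demand d E M r u else 1

def Fplus (d : ℕ) (E : Finset (Finset V)) (c : V → ℝ) (M : Finset V)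
    (r : V → Finset V → ℝ) (v : V) : ℝ :=
  ∑ S ∈ E.filter (fun S => v ∈ S),
    (r v S / ((d : ℝ) - 1)) * ∑ u ∈ S.erase v, theta d E c M r u

section Aux
variable {d : ℕ} {E : Finset (Finset V)} {c : V → ℝ} {M : Finset V} {r : V → Finset V → ℝ}

lemma dpos (hd : 2 ≤ d) : (0:ℝ) < (d:ℝ) - 1 := by
  have : (2:ℝ) ≤ (d:ℝ) := by exact_mod_cast hd
  linarith

lemma demand_nonneg (hd : 2 ≤ d) (hr : ∀ m S, 0 ≤ r m S) (v : V) :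
    0 ≤ demand d E M r v := by
  apply mul_nonneg
  · have h1 : (0:ℝ) < (d:ℝ) - 1 := dpos hd
    positivity
  · exact sum_nonneg fun S _ => sum_nonneg fun m _ => hr m S

lemma theta_nonneg (hd : 2 ≤ d) (hc : ∀ v, 0 ≤ c v) (hr : ∀ m S, 0 ≤ r m S) (u : V) :
    0 ≤ theta d E c M r u := by
  unfold theta
  split
  · exact div_nonneg (hc u) (demand_nonneg hd hr u)
  · norm_num

lemma theta_le_one (hc : ∀ v, 0 ≤ c v) (u : V) : theta d E c M r u ≤ 1 := by
  unfold theta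
  split
  · rename_i h
    have hD : 0 < demand d E M r u := lt_of_le_of_lt (hc u) h.2
    rw [div_le_one hD]
    exact le_of_lt h.2
  · exact le_refl 1

/-- the bracket in the definition of utility equals the sum of thetas -/
lemma stuff_eq (v : V) (S : Finset V) :
    (((S.filter fun u => ¬(u ∈ M ∧ c u < demand d E M r u)).erase v).card : ℝ) +
      ∑ u ∈ (S.filter fun u => u ∈ M ∧ c u < demand d E M r u).erase v,
        c u / demand d E M r u
    = ∑ u ∈ S.erase v, theta d E c M r u := by
  rw [← filter_erase, ← filter_erase,
    ← sum_filter_add_sum_filter_not (S.erase v)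
      (fun u => u ∈ M ∧ c u < demand d E M r u) (theta d E c M r), add_comm]
  congr 1
  · refine sum_congr rfl fun u hu => ?_
    simp only [mem_filter] at hu
    unfold theta
    rw [if_pos hu.2]
  · rw [Finset.card_eq_sum_ones]
    push_cast
    refine sum_congr rfl fun u hu => ?_
    simp only [mem_filter] at hu
    unfold theta
    rw [if_neg hu.2]

lemma sum_theta_le (hc : ∀ v, 0 ≤ c v) (v : V) (S : Finset V) :
    ∑ u ∈ S.erase v, theta d E c M r u ≤ ((S.erase v).card : ℝ) := by
  calc ∑ u ∈ S.erase v, theta d E c M r u ≤ ∑ u ∈ S.erase v, 1 :=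
        sum_le_sum fun u _ => theta_le_one hc u
    _ = ((S.erase v).card : ℝ) := by simp

lemma card_erase_of_unif (hd : 2 ≤ d) (hunif : ∀ S ∈ E, S.card = d) {S : Finset V}
    (hS : S ∈ E) {v : V} (hv : v ∈ S) : ((S.erase v).card : ℝ) = (d:ℝ) - 1 := by
  rw [Finset.card_erase_of_mem hv, hunif S hS]
  have h1 : 1 ≤ d := by omega
  rw [Nat.cast_sub h1]
  norm_num

lemma sum_erase_r (hval : ValidProfile E c M r) {S : Finset V} (hS : S ∈ E) {u : V}
    (hu : u ∈ S) :
    ∑ m ∈ (M ∩ S).erase u, r m S = (∑ m ∈ M ∩ S, r m S) - r u S := by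
  by_cases h : u ∈ M ∩ S
  · exact Finset.sum_erase_eq_sub h
  · rw [Finset.erase_eq_of_notMem h]
    have hM : u ∉ M := fun hM => h (mem_inter.mpr ⟨hM, hu⟩)
    rw [hval.2.1 u S (Or.inl hM)]
    ring

lemma sum_r_eq_c (hval : ValidProfile E c M r) {m : V} (hm : m ∈ M) :
    ∑ S ∈ E.filter (fun S => m ∈ S), r m S = c m := hval.2.2 m hm

/-- swap a sum over all vertices and clubs -/
lemma sum_sum_filter (f : V → Finset V → ℝ) (A : Finset V) :
    ∑ v ∈ A, ∑ S ∈ E.filter (fun S => v ∈ S), f v S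
      = ∑ S ∈ E, ∑ v ∈ A ∩ S, f v S := by
  simp only [sum_filter]
  rw [sum_comm]
  exact sum_congr rfl fun S _ => Finset.sum_ite_mem A S fun v => f v S

lemma sum_c_eq (hval : ValidProfile E c M r) :
    ∑ m ∈ M, c m = ∑ S ∈ E, ∑ m ∈ M ∩ S, r m S := by
  rw [← sum_sum_filter (fun m S => r m S) M]
  exact sum_congr rfl fun m hm => (sum_r_eq_c hval hm).symm

lemma sum_r_le_c (hd : 2 ≤ d) (hval : ValidProfile E c M r) (hc : ∀ v, 0 ≤ c v) (m : V)
    {B : Finset (Finset V)} (hB : B ⊆ E.filter (fun S => m ∈ S)) :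
    ∑ S ∈ B, r m S ≤ c m := by
  by_cases hm : m ∈ M
  · rw [← sum_r_eq_c hval hm]
    exact sum_le_sum_of_subset_of_nonneg hB fun S _ _ => hval.1 m S
  · have h0 : ∀ S ∈ B, r m S = 0 := fun S _ => hval.2.1 m S (Or.inl hm)
    rw [sum_congr rfl h0]
    simpa using hc m

lemma r_le_c (hd : 2 ≤ d) (hval : ValidProfile E c M r) (hc : ∀ v, 0 ≤ c v) (m : V)
    (S : Finset V) : r m S ≤ c m := by
  by_cases h : m ∈ M ∧ m ∈ S ∧ S ∈ E
  · have : ({S} : Finset (Finset V)) ⊆ E.filter (fun S => m ∈ S) := by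
      simp [Finset.singleton_subset_iff, h.2.2, h.2.1]
    have := sum_r_le_c hd hval hc m this
    simpa using this
  · have : r m S = 0 := by
      apply hval.2.1
      tauto
    rw [this]; exact hc m

lemma sum_demand (hd : 2 ≤ d) (hunif : ∀ S ∈ E, S.card = d)
    (hval : ValidProfile E c M r) :
    ∑ u, demand d E M r u = ∑ m ∈ M, c m := by
  unfold demand
  rw [← mul_sum, sum_sum_filter (fun u S => ∑ m ∈ (M ∩ S).erase u, r m S) univ]
  have key : ∀ S ∈ E, ∑ u ∈ univ ∩ S, ∑ m ∈ (M ∩ S).erase u, r m S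
      = ((d:ℝ) - 1) * ∑ m ∈ M ∩ S, r m S := by
    intro S hS
    rw [univ_inter]
    rw [sum_congr rfl (fun u hu => sum_erase_r hval hS hu)]
    rw [sum_sub_distrib, sum_const, hunif S hS]
    have h2 : ∑ x ∈ S, r x S = ∑ m ∈ M ∩ S, r m S := by
      refine (Finset.sum_subset Finset.inter_subset_right fun x hx hnx => ?_).symm
      exact hval.2.1 x S (Or.inl fun hM => hnx (mem_inter.mpr ⟨hM, hx⟩))
    rw [h2, nsmul_eq_mul]
    have h3 : (1:ℝ) ≤ (d:ℝ) := by
      have : (2:ℝ) ≤ (d:ℝ) := by exact_mod_cast hd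
      linarith
    ring
  rw [sum_congr rfl key, ← mul_sum, ← mul_assoc]
  rw [one_div, inv_mul_cancel₀ (ne_of_gt (dpos hd)), one_mul]
  exact (sum_c_eq hval).symm

lemma sum_div_mul_sub {α : Type*} (s : Finset α) (f g : α → ℝ) (a b : ℝ) :
    ∑ x ∈ s, f x / a * (b - g x)
      = (1/a) * ((∑ x ∈ s, f x) * b - ∑ x ∈ s, f x * g x) := by
  calc ∑ x ∈ s, f x / a * (b - g x)
      = ∑ x ∈ s, ((1/a) * (f x * b) - (1/a) * (f x * g x)) :=
        sum_congr rfl fun x _ => by ring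
    _ = (∑ x ∈ s, (1/a) * (f x * b)) - ∑ x ∈ s, (1/a) * (f x * g x) := sum_sub_distrib _ _
    _ = (1/a) * ((∑ x ∈ s, f x) * b - ∑ x ∈ s, f x * g x) := by
        rw [← mul_sum, ← mul_sum, ← mul_sub]
        congr 1
        rw [sum_mul]

lemma sum_mul_one_div_sub {α : Type*} (s : Finset α) (f g : α → ℝ) (a b : ℝ) :
    ∑ x ∈ s, f x * ((1/a) * (b - g x))
      = (1/a) * ((∑ x ∈ s, f x) * b - ∑ x ∈ s, f x * g x) := by
  calc ∑ x ∈ s, f x * ((1/a) * (b - g x))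
      = ∑ x ∈ s, f x / a * (b - g x) := sum_congr rfl fun x _ => by ring
    _ = (1/a) * ((∑ x ∈ s, f x) * b - ∑ x ∈ s, f x * g x) := sum_div_mul_sub s f g a b

/-- money conservation: total fines collected equal total weighted demands -/
lemma sum_Fplus (hd : 2 ≤ d) (hval : ValidProfile E c M r) :
    ∑ m ∈ M, Fplus d E c M r m = ∑ u, theta d E c M r u * demand d E M r u := by
  unfold Fplus
  rw [sum_sum_filter (fun m S => (r m S / ((d:ℝ)-1)) * ∑ u ∈ S.erase m, theta d E c M r u) M]
  have hRHS : ∀ u : V, theta d E c M r u * demand d E M r u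
      = ∑ S ∈ E.filter (fun S => u ∈ S),
          theta d E c M r u * ((1/((d:ℝ)-1)) * ∑ m ∈ (M ∩ S).erase u, r m S) := by
    intro u
    unfold demand
    rw [Finset.mul_sum, Finset.mul_sum]
  rw [sum_congr rfl (fun u _ => hRHS u),
    sum_sum_filter
      (fun u S => theta d E c M r u * ((1/((d:ℝ)-1)) * ∑ m ∈ (M ∩ S).erase u, r m S)) univ]
  refine sum_congr rfl fun S hS => ?_
  rw [univ_inter]
  have hcore : ∑ u ∈ S, theta d E c M r u * r u S
      = ∑ m ∈ M ∩ S, r m S * theta d E c M r m := by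
    rw [← Finset.sum_subset Finset.inter_subset_right
      (fun x hx hnx => by
        rw [hval.2.1 x S (Or.inl fun hM => hnx (mem_inter.mpr ⟨hM, hx⟩))]
        ring)]
    exact sum_congr rfl fun u _ => by ring
  calc ∑ m ∈ M ∩ S, r m S / ((d:ℝ)-1) * ∑ u ∈ S.erase m, theta d E c M r u
      = ∑ m ∈ M ∩ S, r m S / ((d:ℝ)-1)
          * ((∑ u ∈ S, theta d E c M r u) - theta d E c M r m) :=
        sum_congr rfl fun m hm => by
          rw [Finset.sum_erase_eq_sub (mem_inter.mp hm).2]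
    _ = (1/((d:ℝ)-1)) * ((∑ m ∈ M ∩ S, r m S) * (∑ u ∈ S, theta d E c M r u)
          - ∑ m ∈ M ∩ S, r m S * theta d E c M r m) :=
        sum_div_mul_sub (M ∩ S) (fun m => r m S) (theta d E c M r) _ _
    _ = (1/((d:ℝ)-1)) * ((∑ u ∈ S, theta d E c M r u) * (∑ m ∈ M ∩ S, r m S)
          - ∑ u ∈ S, theta d E c M r u * r u S) := by rw [hcore]; ring
    _ = ∑ u ∈ S, theta d E c M r u
          * ((1/((d:ℝ)-1)) * ((∑ m ∈ M ∩ S, r m S) - r u S)) :=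
        (sum_mul_one_div_sub S (theta d E c M r) (fun u => r u S) _ _).symm
    _ = ∑ u ∈ S, theta d E c M r u * ((1/((d:ℝ)-1)) * ∑ m ∈ (M ∩ S).erase u, r m S) :=
        sum_congr rfl fun u hu => by rw [sum_erase_r hval hS hu]

lemma utility_mem {T : ℝ} {v : V} (hv : v ∈ M) :
    utility d E c T M r v
      = -c v + Fplus d E c M r v - min (demand d E M r v) (c v) := by
  unfold utility
  rw [if_pos hv]
  have h : (∑ S ∈ E.filter (fun S => v ∈ S),
      (r v S / ((d : ℝ) - 1)) *
        ((((S.filter fun u => ¬(u ∈ M ∧ c u < demand d E M r u)).erase v).card : ℝ) +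
          ∑ u ∈ (S.filter fun u => u ∈ M ∧ c u < demand d E M r u).erase v,
            c u / demand d E M r u))
      = Fplus d E c M r v := by
    unfold Fplus
    exact sum_congr rfl fun S _ => by rw [stuff_eq]
  rw [h]

lemma utility_not_mem {T : ℝ} {v : V} (hv : v ∉ M) :
    utility d E c T M r v
      = -demand d E M r v - (if ∃ S ∈ E, v ∈ S ∧ M ∩ S = ∅ then T else 0) := by
  unfold utility
  rw [if_neg hv]

lemma Fplus_nonneg (hd : 2 ≤ d) (hc : ∀ v, 0 ≤ c v) (hr : ∀ m S, 0 ≤ r m S) (v : V) :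
    0 ≤ Fplus d E c M r v := by
  apply sum_nonneg
  intro S _
  apply mul_nonneg (div_nonneg (hr v S) (le_of_lt (dpos hd)))
  exact sum_nonneg fun u _ => theta_nonneg hd hc hr u

lemma term_le_r (hd : 2 ≤ d) (hunif : ∀ S ∈ E, S.card = d) (hc : ∀ v, 0 ≤ c v)
    (hr : ∀ m S, 0 ≤ r m S) {m : V} {S : Finset V} (hS : S ∈ E) (hmS : m ∈ S) :
    (r m S / ((d:ℝ)-1)) * ∑ u ∈ S.erase m, theta d E c M r u ≤ r m S := by
  have h1 : ∑ u ∈ S.erase m, theta d E c M r u ≤ (d:ℝ) - 1 := by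
    have := sum_theta_le (d := d) (E := E) (M := M) (r := r) hc m S
    rwa [card_erase_of_unif hd hunif hS hmS] at this
  calc (r m S / ((d:ℝ)-1)) * ∑ u ∈ S.erase m, theta d E c M r u
      ≤ (r m S / ((d:ℝ)-1)) * ((d:ℝ)-1) :=
        mul_le_mul_of_nonneg_left h1 (div_nonneg (hr m S) (le_of_lt (dpos hd)))
    _ = r m S := div_mul_cancel₀ _ (ne_of_gt (dpos hd))

lemma Fplus_le_c (hd : 2 ≤ d) (hunif : ∀ S ∈ E, S.card = d) (hc : ∀ v, 0 ≤ c v)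
    (hval : ValidProfile E c M r) {m : V} (hm : m ∈ M) :
    Fplus d E c M r m ≤ c m := by
  unfold Fplus
  calc ∑ S ∈ E.filter (fun S => m ∈ S),
        (r m S / ((d:ℝ)-1)) * ∑ u ∈ S.erase m, theta d E c M r u
      ≤ ∑ S ∈ E.filter (fun S => m ∈ S), r m S := by
        refine sum_le_sum fun S hS => ?_
        simp only [mem_filter] at hS
        exact term_le_r hd hunif hc hval.1 hS.1 hS.2
    _ = c m := sum_r_eq_c hval hm

lemma Fplus_split (hd : 2 ≤ d) (hunif : ∀ S ∈ E, S.card = d) (hc : ∀ v, 0 ≤ c v)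
    (hval : ValidProfile E c M r) {m : V} (hm : m ∈ M) {S₀ : Finset V}
    (hS₀ : S₀ ∈ E) (hmS₀ : m ∈ S₀) :
    Fplus d E c M r m ≤ c m - r m S₀
      + (r m S₀ / ((d:ℝ)-1)) * ∑ u ∈ S₀.erase m, theta d E c M r u := by
  have hmem : S₀ ∈ E.filter (fun S => m ∈ S) := mem_filter.mpr ⟨hS₀, hmS₀⟩
  unfold Fplus
  rw [← Finset.add_sum_erase _ _ hmem, add_comm]
  have h2 : ∑ S ∈ (E.filter (fun S => m ∈ S)).erase S₀,
      (r m S / ((d:ℝ)-1)) * ∑ u ∈ S.erase m, theta d E c M r u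
      ≤ c m - r m S₀ := by
    calc ∑ S ∈ (E.filter (fun S => m ∈ S)).erase S₀,
          (r m S / ((d:ℝ)-1)) * ∑ u ∈ S.erase m, theta d E c M r u
        ≤ ∑ S ∈ (E.filter (fun S => m ∈ S)).erase S₀, r m S := by
          refine sum_le_sum fun S hS => ?_
          have hS' := Finset.mem_of_mem_erase hS
          simp only [mem_filter] at hS'
          exact term_le_r hd hunif hc hval.1 hS'.1 hS'.2
      _ = c m - r m S₀ := by
          rw [Finset.sum_erase_eq_sub hmem, sum_r_eq_c hval hm]
  linarith [h2]

lemma demand_eq_of {M' : Finset V} {r' : V → Finset V → ℝ} (v : V)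
    (hM : ∀ S, (M' ∩ S).erase v = (M ∩ S).erase v)
    (hr : ∀ u S, u ≠ v → r' u S = r u S) :
    demand d E M' r' v = demand d E M r v := by
  unfold demand
  congr 1
  refine sum_congr rfl fun S _ => ?_
  rw [hM S]
  exact sum_congr rfl fun m hm => hr m S (Finset.ne_of_mem_erase hm)

lemma erase_insert_inter (v : V) (S : Finset V) :
    ((insert v M) ∩ S).erase v = (M ∩ S).erase v := by
  ext u
  simp only [Finset.mem_erase, Finset.mem_inter, Finset.mem_insert]
  tauto

lemma erase_erase_inter (v : V) (S : Finset V) :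
    ((M.erase v) ∩ S).erase v = (M ∩ S).erase v := by
  ext u
  simp only [Finset.mem_erase, Finset.mem_inter]
  tauto

lemma valid_join (hval : ValidProfile E c M r) (v : V) (ρ : Finset V → ℝ)
    (hρ0 : ∀ S, 0 ≤ ρ S) (hsupp : ∀ S, v ∉ S ∨ S ∉ E → ρ S = 0)
    (hsum : ∑ S ∈ E.filter (fun S => v ∈ S), ρ S = c v) :
    ValidProfile E c (insert v M) (fun u S => if u = v then ρ S else r u S)
      ∧ Deviation v M (insert v M) r (fun u S => if u = v then ρ S else r u S) := by
  constructor
  · refine ⟨fun m S => ?_, fun m S h => ?_, fun m hm => ?_⟩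
    · dsimp only
      split
      · exact hρ0 S
      · exact hval.1 m S
    · dsimp only
      split
      · rename_i he
        subst he
        rcases h with h | h
        · exact absurd (Finset.mem_insert_self m M) h
        · exact hsupp S h
      · rename_i he
        apply hval.2.1
        rcases h with h | h
        · exact Or.inl fun hM => h (Finset.mem_insert_of_mem hM)
        · exact Or.inr h
    · by_cases hmv : m = v
      · subst hmv
        simpa using hsum
      · have hm' : m ∈ M := by
          rcases Finset.mem_insert.mp hm with h | h
          · exact absurd h hmv
          · exact h
        calc ∑ S ∈ E.filter (fun S => m ∈ S), (if m = v then ρ S else r m S)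
            = ∑ S ∈ E.filter (fun S => m ∈ S), r m S :=
              sum_congr rfl fun S _ => if_neg hmv
          _ = c m := sum_r_eq_c hval hm'
  · exact ⟨fun u hu => by simp [Finset.mem_insert, hu], fun u S hu => if_neg hu⟩

lemma valid_leave (hval : ValidProfile E c M r) (m : V) :
    ValidProfile E c (M.erase m) (fun u S => if u = m then 0 else r u S)
      ∧ Deviation m M (M.erase m) r (fun u S => if u = m then 0 else r u S) := by
  constructor
  · refine ⟨fun u S => ?_, fun u S h => ?_, fun u hu => ?_⟩
    · dsimp only
      split
      · exact le_refl 0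
      · exact hval.1 u S
    · dsimp only
      split
      · rfl
      · rename_i he
        apply hval.2.1
        rcases h with h | h
        · exact Or.inl fun hM => h (Finset.mem_erase.mpr ⟨he, hM⟩)
        · exact Or.inr h
    · have hum : u ≠ m := (Finset.mem_erase.mp hu).1
      calc ∑ S ∈ E.filter (fun S => u ∈ S), (if u = m then 0 else r u S)
          = ∑ S ∈ E.filter (fun S => u ∈ S), r u S :=
            sum_congr rfl fun S _ => if_neg hum
        _ = c u := sum_r_eq_c hval (Finset.mem_erase.mp hu).2
  · exact ⟨fun u hu => by simp [Finset.mem_erase, hu], fun u S hu => if_neg hu⟩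

lemma valid_realloc (hval : ValidProfile E c M r) {m : V} (hm : m ∈ M)
    (ρ : Finset V → ℝ) (hρ0 : ∀ S, 0 ≤ ρ S) (hsupp : ∀ S, m ∉ S ∨ S ∉ E → ρ S = 0)
    (hsum : ∑ S ∈ E.filter (fun S => m ∈ S), ρ S = c m) :
    ValidProfile E c M (fun u S => if u = m then ρ S else r u S)
      ∧ Deviation m M M r (fun u S => if u = m then ρ S else r u S) := by
  constructor
  · refine ⟨fun u S => ?_, fun u S h => ?_, fun u hu => ?_⟩
    · dsimp only
      split
      · exact hρ0 S
      · exact hval.1 u S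
    · dsimp only
      split
      · rename_i he
        subst he
        rcases h with h | h
        · exact absurd hm h
        · exact hsupp S h
      · exact hval.2.1 u S h
    · by_cases hum : u = m
      · subst hum
        simpa using hsum
      · calc ∑ S ∈ E.filter (fun S => u ∈ S), (if u = m then ρ S else r u S)
            = ∑ S ∈ E.filter (fun S => u ∈ S), r u S :=
              sum_congr rfl fun S _ => if_neg hum
          _ = c u := sum_r_eq_c hval hu
  · exact ⟨fun u _ => Iff.rfl, fun u S hu => if_neg hu⟩

lemma nash_hitting (hd : 2 ≤ d) (hunif : ∀ S ∈ E, S.card = d) (hc : ∀ v, 0 ≤ c v)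
    {T : ℝ} (hT : 2 * ∑ v, c v < T) (hnash : IsNashEq d E c T M r) :
    ∀ S ∈ E, (M ∩ S).Nonempty := by
  intro S₀ hS₀
  by_contra hne
  rw [Finset.not_nonempty_iff_eq_empty] at hne
  have hcard : S₀.card = d := hunif S₀ hS₀
  have hS₀ne : S₀.Nonempty := Finset.card_pos.mp (by omega)
  obtain ⟨v, hv⟩ := hS₀ne
  have hvM : v ∉ M := fun h => by
    have : v ∈ M ∩ S₀ := mem_inter.mpr ⟨h, hv⟩
    rw [hne] at this
    exact absurd this (Finset.notMem_empty v)
  have hval := hnash.1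
  obtain ⟨hval', hdev⟩ := valid_join hval v (fun S => if S = S₀ then c v else 0)
    (fun S => by split <;> [exact hc v; exact le_refl 0])
    (fun S h => by
      split
      · rename_i he; subst he; rcases h with h | h
        · exact absurd hv h
        · exact absurd hS₀ h
      · rfl)
    (by rw [Finset.sum_ite_eq' (E.filter (fun S => v ∈ S)) S₀ (fun _ => c v),
          if_pos (mem_filter.mpr ⟨hS₀, hv⟩)])
  have hle := hnash.2 v _ _ hval' hdev
  rw [utility_not_mem hvM, utility_mem (Finset.mem_insert_self v M)] at hle
  rw [if_pos ⟨S₀, hS₀, hv, hne⟩] at hle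
  have hF : 0 ≤ Fplus d E c (insert v M) (fun u S => if u = v then
      (if S = S₀ then c v else 0) else r u S) v := Fplus_nonneg hd hc hval'.1 v
  have hmin : min (demand d E (insert v M)
      (fun u S => if u = v then (if S = S₀ then c v else 0) else r u S) v) (c v) ≤ c v :=
    min_le_right _ _
  have hD : 0 ≤ demand d E M r v := demand_nonneg hd hval.1 v
  have hcv : c v ≤ ∑ u, c u := Finset.single_le_sum (fun u _ => hc u) (mem_univ v)
  have hsum0 : 0 ≤ ∑ u, c u := Finset.sum_nonneg fun u _ => hc u
  linarith

lemma Fplus_ge_essential (hd : 2 ≤ d) (hunif : ∀ S ∈ E, S.card = d) (hc : ∀ v, 0 ≤ c v)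
    {T : ℝ} (hnash : IsNashEq d E c T M r) {m : V} (hm : m ∈ M)
    (hess : ∃ S ∈ E, m ∈ S ∧ M ∩ S = {m}) :
    c m ≤ Fplus d E c M r m := by
  obtain ⟨S₀, hS₀, hmS₀, hMS₀⟩ := hess
  have hval := hnash.1
  obtain ⟨hval', hdev⟩ := valid_realloc hval hm (fun S => if S = S₀ then c m else 0)
    (fun S => by split <;> [exact hc m; exact le_refl 0])
    (fun S h => by
      split
      · rename_i he; subst he; rcases h with h | h
        · exact absurd hmS₀ h
        · exact absurd hS₀ h
      · rfl)
    (by rw [Finset.sum_ite_eq' (E.filter (fun S => m ∈ S)) S₀ (fun _ => c m),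
          if_pos (mem_filter.mpr ⟨hS₀, hmS₀⟩)])
  set r' : V → Finset V → ℝ :=
    fun u S => if u = m then (if S = S₀ then c m else 0) else r u S with hr'
  have hle := hnash.2 m M r' hval' hdev
  rw [utility_mem hm, utility_mem hm] at hle
  have hDm : demand d E M r' m = demand d E M r m :=
    demand_eq_of m (fun S => rfl) (fun u S hu => by rw [hr']; exact if_neg hu)
  have hF' : Fplus d E c M r' m = c m := by
    unfold Fplus
    have hterm : ∀ S ∈ E.filter (fun S => m ∈ S),
        (r' m S / ((d:ℝ)-1)) * ∑ u ∈ S.erase m, theta d E c M r' u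
        = if S = S₀ then
            (c m / ((d:ℝ)-1)) * ∑ u ∈ S.erase m, theta d E c M r' u else 0 := by
      intro S _
      rw [hr']
      dsimp only
      rw [if_pos rfl]
      split
      · rfl
      · rw [zero_div, zero_mul]
    rw [sum_congr rfl hterm,
      Finset.sum_ite_eq' (E.filter (fun S => m ∈ S)) S₀
        (fun S => (c m / ((d:ℝ)-1)) * ∑ u ∈ S.erase m, theta d E c M r' u),
      if_pos (mem_filter.mpr ⟨hS₀, hmS₀⟩)]
    have hth1 : ∀ u ∈ S₀.erase m, theta d E c M r' u = 1 := by
      intro u hu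
      unfold theta
      rw [if_neg]
      rintro ⟨huM, -⟩
      have : u ∈ M ∩ S₀ := mem_inter.mpr ⟨huM, Finset.mem_of_mem_erase hu⟩
      rw [hMS₀] at this
      exact Finset.ne_of_mem_erase hu (Finset.mem_singleton.mp this)
    rw [sum_congr rfl hth1, sum_const, card_erase_of_mem hmS₀, hunif S₀ hS₀,
      nsmul_eq_mul, mul_one]
    rw [Nat.cast_sub (by omega : 1 ≤ d)]
    push_cast
    exact div_mul_cancel₀ (c m) (ne_of_gt (dpos hd))
  rw [hDm, hF'] at hle
  linarith

lemma Fplus_ge_nonessential (hd : 2 ≤ d) (hc : ∀ v, 0 ≤ c v)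
    {T : ℝ} (hnash : IsNashEq d E c T M r) (hhit : ∀ S ∈ E, (M ∩ S).Nonempty)
    {m : V} (hm : m ∈ M) (hness : ¬ ∃ S ∈ E, m ∈ S ∧ M ∩ S = {m}) :
    c m + min (demand d E M r m) (c m) - demand d E M r m ≤ Fplus d E c M r m := by
  have hval := hnash.1
  obtain ⟨hval', hdev⟩ := valid_leave hval m
  set r' : V → Finset V → ℝ := fun u S => if u = m then 0 else r u S with hr'
  have hle := hnash.2 m _ _ hval' hdev
  rw [utility_mem hm, utility_not_mem (Finset.notMem_erase m M)] at hle
  have hDm : demand d E (M.erase m) r' m = demand d E M r m :=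
    demand_eq_of m (fun S => erase_erase_inter m S) (fun u S hu => by rw [hr']; exact if_neg hu)
  have hpen : ¬ ∃ S ∈ E, m ∈ S ∧ (M.erase m) ∩ S = ∅ := by
    rintro ⟨S, hS, hmS, hempty⟩
    have hsub : M ∩ S ⊆ {m} := by
      intro x hx
      rw [Finset.mem_singleton]
      by_contra hxm
      have : x ∈ (M.erase m) ∩ S :=
        mem_inter.mpr ⟨Finset.mem_erase.mpr ⟨hxm, (mem_inter.mp hx).1⟩, (mem_inter.mp hx).2⟩
      rw [hempty] at this
      exact absurd this (Finset.notMem_empty x)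
    rcases Finset.subset_singleton_iff.mp hsub with h | h
    · exact absurd h (Finset.nonempty_iff_ne_empty.mp (hhit S hS))
    · exact hness ⟨S, hS, hmS, h⟩
  rw [hDm, if_neg hpen] at hle
  linarith

lemma theta_mul_demand (hc : ∀ v, 0 ≤ c v) (u : V) :
    theta d E c M r u * demand d E M r u
      = demand d E M r u - (if u ∈ M then max (demand d E M r u - c u) 0 else 0) := by
  unfold theta
  by_cases h : u ∈ M ∧ c u < demand d E M r u
  · rw [if_pos h, if_pos h.1, max_eq_left (by linarith [h.2])]
    have hD : demand d E M r u ≠ 0 := ne_of_gt (lt_of_le_of_lt (hc u) h.2)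
    field_simp
    ring
  · rw [if_neg h, one_mul]
    by_cases hu : u ∈ M
    · have hDc : demand d E M r u ≤ c u := by
        by_contra hlt
        exact h ⟨hu, by linarith⟩
      rw [if_pos hu, max_eq_right (by linarith)]
      ring
    · rw [if_neg hu]
      ring

/-- the star identity: in a Nash equilibrium every mafioso's fine income equals
his cost minus his excess demand -/
lemma Fplus_eq_star (hd : 2 ≤ d) (hunif : ∀ S ∈ E, S.card = d) (hc : ∀ v, 0 ≤ c v)
    {T : ℝ} (hT : 2 * ∑ v, c v < T) (hnash : IsNashEq d E c T M r) :
    ∀ m ∈ M, Fplus d E c M r m = c m - max (demand d E M r m - c m) 0 := by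
  have hval := hnash.1
  have hhit := nash_hitting hd hunif hc hT hnash
  have hub : ∀ m ∈ M, c m - max (demand d E M r m - c m) 0 - Fplus d E c M r m ≤ 0 := by
    intro m hm
    have hmax : max (demand d E M r m - c m) 0
        = demand d E M r m - min (demand d E M r m) (c m) := by
      rcases le_total (demand d E M r m) (c m) with h | h
      · rw [max_eq_right (by linarith), min_eq_left h]
        ring
      · rw [max_eq_left (by linarith), min_eq_right h]
    by_cases hess : ∃ S ∈ E, m ∈ S ∧ M ∩ S = {m}
    · have h1 := Fplus_ge_essential hd hunif hc hnash hm hess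
      have h2 : 0 ≤ max (demand d E M r m - c m) 0 := le_max_right _ _
      linarith
    · have h1 := Fplus_ge_nonessential hd hc hnash hhit hm hess
      linarith
  have hsum : ∑ m ∈ M, (c m - max (demand d E M r m - c m) 0 - Fplus d E c M r m) = 0 := by
    rw [sum_sub_distrib, sum_sub_distrib]
    have h1 : ∑ m ∈ M, Fplus d E c M r m
        = ∑ u, theta d E c M r u * demand d E M r u := sum_Fplus hd hval
    have h2 : ∑ u, theta d E c M r u * demand d E M r u
        = (∑ u, demand d E M r u)
          - ∑ u, (if u ∈ M then max (demand d E M r u - c u) 0 else 0) := by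
      rw [← sum_sub_distrib]
      exact sum_congr rfl fun u _ => theta_mul_demand hc u
    have h3 : ∑ u, (if u ∈ M then max (demand d E M r u - c u) 0 else 0)
        = ∑ m ∈ M, max (demand d E M r m - c m) 0 := by
      rw [Finset.sum_ite_mem, univ_inter]
    rw [h1, h2, h3, sum_demand hd hunif hval]
    ring
  intro m hm
  have := (Finset.sum_eq_zero_iff_of_nonpos hub).mp hsum m hm
  linarith

/-- in a Nash equilibrium no agent is protected -/
lemma no_protected (hd : 2 ≤ d) (hunif : ∀ S ∈ E, S.card = d) (hc : ∀ v, 0 ≤ c v)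
    {T : ℝ} (hT : 2 * ∑ v, c v < T) (hnash : IsNashEq d E c T M r) :
    ∀ u ∈ M, demand d E M r u ≤ c u := by
  have hval := hnash.1
  have hstar := Fplus_eq_star hd hunif hc hT hnash
  by_contra hP
  push_neg at hP
  obtain ⟨u₀, hu₀M, hu₀⟩ := hP
  set P := M.filter (fun u => c u < demand d E M r u) with hPdef
  have hu₀P : u₀ ∈ P := mem_filter.mpr ⟨hu₀M, hu₀⟩
  have hPM : P ⊆ M := Finset.filter_subset _ _
  -- protection propagates backwards along positive ransom payments
  have hprop : ∀ m ∈ M, ∀ S ∈ E, m ∈ S → 0 < r m S →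
      ∀ u ∈ P, u ∈ S → u ≠ m → m ∈ P := by
    intro m hm S hS hmS hrpos u huP huS hum
    have huM := (mem_filter.mp huP).1
    have hcu := (mem_filter.mp huP).2
    have hDu : 0 < demand d E M r u := lt_of_le_of_lt (hc u) hcu
    have hθu : theta d E c M r u < 1 := by
      unfold theta
      rw [if_pos ⟨huM, hcu⟩, div_lt_one hDu]
      exact hcu
    have hu' : u ∈ S.erase m := Finset.mem_erase.mpr ⟨hum, huS⟩
    have hsumθ : ∑ x ∈ S.erase m, theta d E c M r x < (d:ℝ) - 1 := by
      rw [← Finset.add_sum_erase _ _ hu']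
      have hb : ∑ x ∈ (S.erase m).erase u, theta d E c M r x
          ≤ (((S.erase m).erase u).card : ℝ) := by
        calc ∑ x ∈ (S.erase m).erase u, theta d E c M r x
            ≤ ∑ x ∈ (S.erase m).erase u, 1 := sum_le_sum fun x _ => theta_le_one hc x
          _ = (((S.erase m).erase u).card : ℝ) := by simp
      have hcard : (((S.erase m).erase u).card : ℝ) = (d:ℝ) - 2 := by
        rw [Finset.card_erase_of_mem hu', Finset.card_erase_of_mem hmS, hunif S hS]
        rw [Nat.cast_sub (by omega : 1 ≤ d - 1), Nat.cast_sub (by omega : 1 ≤ d)]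
        push_cast
        ring
      rw [hcard] at hb
      linarith
    have hsplit := Fplus_split hd hunif hc hval hm hS hmS
    have hterm : (r m S / ((d:ℝ)-1)) * ∑ x ∈ S.erase m, theta d E c M r x < r m S := by
      calc (r m S / ((d:ℝ)-1)) * ∑ x ∈ S.erase m, theta d E c M r x
          < (r m S / ((d:ℝ)-1)) * ((d:ℝ)-1) := by
            apply mul_lt_mul_of_pos_left hsumθ
            exact div_pos hrpos (dpos hd)
        _ = r m S := div_mul_cancel₀ _ (ne_of_gt (dpos hd))
    have hFlt : Fplus d E c M r m < c m := by linarith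
    rw [hstar m hm] at hFlt
    have hmaxpos : 0 < max (demand d E M r m - c m) 0 := by linarith
    have : c m < demand d E M r m := by
      rcases max_cases (demand d E M r m - c m) (0:ℝ) with ⟨he, -⟩ | ⟨he, -⟩
      · rw [he] at hmaxpos
        linarith
      · rw [he] at hmaxpos
        linarith
    exact mem_filter.mpr ⟨hm, this⟩
  -- total demand on protected agents is at most their total cost
  have hkey : ∑ u ∈ P, demand d E M r u ≤ ∑ m ∈ P, c m := by
    unfold demand
    rw [← mul_sum,
      sum_sum_filter (fun u S => ∑ m ∈ (M ∩ S).erase u, r m S) P]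
    have hperS : ∀ S ∈ E, ∑ u ∈ P ∩ S, ∑ m ∈ (M ∩ S).erase u, r m S
        ≤ ((d:ℝ) - 1) * ∑ m ∈ P ∩ S, r m S := by
      intro S hS
      have hQ0 : 0 ≤ ∑ m ∈ P ∩ S, r m S := sum_nonneg fun m _ => hval.1 m S
      have hinner : ∀ u ∈ P ∩ S, ∑ m ∈ (M ∩ S).erase u, r m S
          ≤ (∑ m ∈ P ∩ S, r m S) - r u S := by
        intro u huPS
        have h1 : ∑ m ∈ (M ∩ S).erase u, r m S ≤ ∑ m ∈ (P ∩ S).erase u, r m S := by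
          rw [← Finset.sum_subset (Finset.erase_subset_erase u
            (Finset.inter_subset_inter_right hPM)) (fun x hx hnx => ?_)]
          -- x ∈ (M∩S).erase u, x ∉ (P∩S).erase u ⇒ r x S = 0
          by_contra hne0
          have hrpos : 0 < r x S := lt_of_le_of_ne (hval.1 x S) (Ne.symm hne0)
          have hxM := mem_inter.mp (Finset.mem_of_mem_erase hx)
          have hxP : x ∈ P := hprop x hxM.1 S hS hxM.2 hrpos u (mem_inter.mp huPS).1
            (mem_inter.mp huPS).2 (Ne.symm (Finset.ne_of_mem_erase hx))
          exact hnx (Finset.mem_erase.mpr ⟨Finset.ne_of_mem_erase hx,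
            mem_inter.mpr ⟨hxP, hxM.2⟩⟩)
        have h2 : ∑ m ∈ (P ∩ S).erase u, r m S = (∑ m ∈ P ∩ S, r m S) - r u S :=
          Finset.sum_erase_eq_sub huPS
        linarith
      calc ∑ u ∈ P ∩ S, ∑ m ∈ (M ∩ S).erase u, r m S
          ≤ ∑ u ∈ P ∩ S, ((∑ m ∈ P ∩ S, r m S) - r u S) := sum_le_sum hinner
        _ = ((P ∩ S).card : ℝ) * (∑ m ∈ P ∩ S, r m S) - ∑ u ∈ P ∩ S, r u S := by
            rw [sum_sub_distrib, sum_const, nsmul_eq_mul]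
        _ = (((P ∩ S).card : ℝ) - 1) * ∑ m ∈ P ∩ S, r m S := by ring
        _ ≤ ((d:ℝ) - 1) * ∑ m ∈ P ∩ S, r m S := by
            apply mul_le_mul_of_nonneg_right _ hQ0
            have hsub : (P ∩ S).card ≤ d := by
              rw [← hunif S hS]
              exact Finset.card_le_card Finset.inter_subset_right
            have : ((P ∩ S).card : ℝ) ≤ (d:ℝ) := by exact_mod_cast hsub
            linarith
    calc (1/((d:ℝ)-1)) * ∑ S ∈ E, ∑ u ∈ P ∩ S, ∑ m ∈ (M ∩ S).erase u, r m S
        ≤ (1/((d:ℝ)-1)) * ∑ S ∈ E, ((d:ℝ)-1) * ∑ m ∈ P ∩ S, r m S := by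
          apply mul_le_mul_of_nonneg_left (sum_le_sum hperS)
          have h1 : (0:ℝ) < (d:ℝ) - 1 := dpos hd
          positivity
      _ = ∑ S ∈ E, ∑ m ∈ P ∩ S, r m S := by
          rw [← mul_sum, ← mul_assoc, one_div,
            inv_mul_cancel₀ (ne_of_gt (dpos hd)), one_mul]
      _ = ∑ m ∈ P, c m := by
          rw [← sum_sum_filter (fun m S => r m S) P]
          exact sum_congr rfl fun m hm => sum_r_eq_c hval (hPM hm)
  have hlt : ∑ u ∈ P, c u < ∑ u ∈ P, demand d E M r u :=
    Finset.sum_lt_sum_of_nonempty ⟨u₀, hu₀P⟩ fun u hu => (mem_filter.mp hu).2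
  linarith

set_option maxHeartbeats 2000000 in
/-- in a Nash equilibrium, civilians are not demanded more than `d/(d-1)` times their cost -/
lemma civilian_bound (hd : 2 ≤ d) (hunif : ∀ S ∈ E, S.card = d) (hc : ∀ v, 0 ≤ c v)
    {T : ℝ} (hT : 2 * ∑ v, c v < T) (hnash : IsNashEq d E c T M r) :
    ∀ v ∉ M, ((d:ℝ) - 1) * demand d E M r v ≤ (d:ℝ) * c v := by
  intro v hvM
  by_contra hcon
  push_neg at hcon
  have hval := hnash.1
  have hhit := nash_hitting hd hunif hc hT hnash
  have hnop := no_protected hd hunif hc hT hnash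
  set a : ℝ := (d:ℝ) - 1 with ha
  have ha0 : 0 < a := dpos hd
  have ha1 : 1 ≤ a := by
    have : (2:ℝ) ≤ (d:ℝ) := by exact_mod_cast hd
    rw [ha]; linarith
  have hda : (d:ℝ) = a + 1 := by rw [ha]; ring
  set x : ℝ := demand d E M r v with hx
  have hcv0 : 0 ≤ c v := hc v
  have hx0 : 0 < x := by
    by_contra hx0
    push_neg at hx0
    have := demand_nonneg (E := E) (M := M) hd hval.1 v
    rw [← hx] at this
    have hxz : x = 0 := le_antisymm hx0 this
    rw [hxz] at hcon
    have : (0:ℝ) ≤ (d:ℝ) * c v := by positivity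
    linarith
  have hcx : c v < x := by
    have h1 : a * c v ≤ (d:ℝ) * c v := by nlinarith
    have := lt_of_le_of_lt h1 hcon
    exact lt_of_mul_lt_mul_left this (le_of_lt ha0)
  -- the contribution of each club to the demand on v
  set R : Finset V → ℝ := fun S => ∑ m ∈ (M ∩ S).erase v, r m S with hR
  have hR0 : ∀ S, 0 ≤ R S := fun S => sum_nonneg fun m _ => hval.1 m S
  have hW : ∑ S ∈ E.filter (fun S => v ∈ S), R S = a * x := by
    have hxdef : x = (1/a) * ∑ S ∈ E.filter (fun S => v ∈ S), R S := rfl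
    rw [hxdef]
    field_simp
  -- the proportional-spreading deviation of v
  set ρ : Finset V → ℝ := fun S => if v ∈ S ∧ S ∈ E then (c v / (a * x)) * R S else 0
    with hρ
  have hρ0 : ∀ S, 0 ≤ ρ S := by
    intro S
    rw [hρ]
    dsimp only
    split
    · apply mul_nonneg (div_nonneg hcv0 (by positivity)) (hR0 S)
    · exact le_refl 0
  have hρval : ∀ S ∈ E.filter (fun S => v ∈ S), ρ S = (c v / (a * x)) * R S := by
    intro S hS
    rw [hρ]
    exact if_pos ⟨(mem_filter.mp hS).2, (mem_filter.mp hS).1⟩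
  have hsumρ : ∑ S ∈ E.filter (fun S => v ∈ S), ρ S = c v := by
    rw [sum_congr rfl hρval, ← mul_sum, hW]
    field_simp
  obtain ⟨hval', hdev⟩ := valid_join hval v ρ hρ0
    (fun S h => by
      rw [hρ]
      dsimp only
      rw [if_neg]
      rintro ⟨h1, h2⟩
      rcases h with h | h
      · exact h h1
      · exact h h2)
    hsumρ
  set M' : Finset V := insert v M with hM'
  set r' : V → Finset V → ℝ := fun u S => if u = v then ρ S else r u S with hr'
  have hle := hnash.2 v M' r' hval' hdev
  -- the demand on v is unchanged
  have hDv' : demand d E M' r' v = x :=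
    demand_eq_of v (fun S => erase_insert_inter v S) (fun u S hu => by
      rw [hr']
      exact if_neg hu)
  rw [utility_not_mem hvM, utility_mem (Finset.mem_insert_self v M),
    if_neg (by
      rintro ⟨S, hS, hvS, hempty⟩
      exact absurd hempty (Finset.nonempty_iff_ne_empty.mp (hhit S hS))), hDv'] at hle
  rw [min_eq_right (le_of_lt hcx)] at hle
  -- hle : -c v + Fplus - c v ≤ -x - 0
  -- demand on any other agent under the deviation
  have hD'u : ∀ u : V, u ≠ v → demand d E M' r' u
      = demand d E M r u
        + (1/a) * ∑ S' ∈ E.filter (fun S => u ∈ S), (if v ∈ S' then ρ S' else 0) := by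
    intro u hu
    unfold demand
    rw [← ha, ← mul_add, ← sum_add_distrib]
    congr 1
    refine sum_congr rfl fun S' hS' => ?_
    by_cases hvS' : v ∈ S'
    · rw [if_pos hvS']
      have hset : (M' ∩ S').erase u = insert v ((M ∩ S').erase u) := by
        ext z
        simp only [hM', mem_erase, mem_inter, mem_insert]
        constructor
        · rintro ⟨hzu, hz | hzM, hzS⟩
          · exact Or.inl hz
          · exact Or.inr ⟨hzu, hzM, hzS⟩
        · rintro (hz | ⟨hzu, hzM, hzS⟩)
          · subst hz
            exact ⟨Ne.symm hu, Or.inl rfl, hvS'⟩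
          · exact ⟨hzu, Or.inr hzM, hzS⟩
      rw [hset, Finset.sum_insert (fun hmem => hvM (mem_inter.mp (Finset.mem_of_mem_erase hmem)).1)]
      have hρv : r' v S' = ρ S' := by rw [hr']; exact if_pos rfl
      rw [hρv, add_comm]
      congr 1
      refine sum_congr rfl fun m hm => ?_
      have hmv : m ≠ v := fun he => hvM (by
        subst he
        exact (mem_inter.mp (Finset.mem_of_mem_erase hm)).1)
      rw [hr']
      exact if_neg hmv
    · rw [if_neg hvS', add_zero]
      have hset : (M' ∩ S').erase u = (M ∩ S').erase u := by
        ext z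
        simp only [hM', mem_erase, mem_inter, mem_insert]
        constructor
        · rintro ⟨hzu, hz | hzM, hzS⟩
          · exact absurd (hz ▸ hzS) hvS'
          · exact ⟨hzu, hzM, hzS⟩
        · rintro ⟨hzu, hzM, hzS⟩
          exact ⟨hzu, Or.inr hzM, hzS⟩
      rw [hset]
      refine sum_congr rfl fun m hm => ?_
      have hmv : m ≠ v := fun he => hvM (by
        subst he
        exact (mem_inter.mp (Finset.mem_of_mem_erase hm)).1)
      rw [hr']
      exact if_neg hmv
  -- the uniform lower bound on the weights after the deviation
  set A : ℝ := a^2 * x with hA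
  have hA0 : 0 < A := by rw [hA]; positivity
  have hden : 0 < A + (d:ℝ) * c v := by positivity
  set β : ℝ := A / (A + (d:ℝ) * c v) with hβ
  have hβ1 : β ≤ 1 := by
    rw [hβ, div_le_one hden]
    nlinarith
  have hθβ : ∀ S ∈ E.filter (fun S => v ∈ S), ∀ u ∈ S.erase v,
      β ≤ theta d E c M' r' u := by
    intro S hS u hu
    have huv : u ≠ v := Finset.ne_of_mem_erase hu
    unfold theta
    split
    · rename_i hprot
      have huM : u ∈ M := by
        rcases Finset.mem_insert.mp hprot.1 with h | h
        · exact absurd h huv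
        · exact h
      have hDule : demand d E M r u ≤ c u := hnop u huM
      have hD'upos : 0 < demand d E M' r' u := lt_of_le_of_lt (hc u) hprot.2
      rw [hβ, div_le_div_iff₀ hden hD'upos]
      -- A * D' u ≤ c u * (A + d * c v)
      set B : Finset (Finset V) := (E.filter (fun S => u ∈ S)).filter (fun S => v ∈ S)
        with hB
      have hBsub : B ⊆ E.filter (fun S => u ∈ S) := Finset.filter_subset _ _
      have hGι : ∑ S' ∈ E.filter (fun S => u ∈ S), (if v ∈ S' then ρ S' else 0)
          = (c v / (a * x)) * ∑ S' ∈ B, R S' := by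
        rw [hB, ← Finset.sum_filter, mul_sum]
        refine sum_congr rfl fun S' hS' => ?_
        simp only [mem_filter] at hS'
        rw [hρ]
        dsimp only
        rw [if_pos ⟨hS'.2, hS'.1.1⟩]
      have hGB : ∑ S' ∈ B, R S' ≤ (a + 1) * c u := by
        have h1 : a * demand d E M r u
            = ∑ S' ∈ E.filter (fun S => u ∈ S), ∑ m ∈ (M ∩ S').erase u, r m S' := by
          have : demand d E M r u = (1/a)
              * ∑ S' ∈ E.filter (fun S => u ∈ S), ∑ m ∈ (M ∩ S').erase u, r m S' := rfl
          rw [this]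
          field_simp
        have h2 : ∑ S' ∈ B, ∑ m ∈ (M ∩ S').erase u, r m S'
            ≤ ∑ S' ∈ E.filter (fun S => u ∈ S), ∑ m ∈ (M ∩ S').erase u, r m S' :=
          sum_le_sum_of_subset_of_nonneg hBsub
            (fun S' _ _ => sum_nonneg fun m _ => hval.1 m S')
        have h3 : ∀ S' ∈ B, ∑ m ∈ (M ∩ S').erase u, r m S' = R S' - r u S' := by
          intro S' hS'
          simp only [hB, mem_filter] at hS'
          have hRS : R S' = ∑ m ∈ M ∩ S', r m S' := by
            rw [hR]
            dsimp only
            rw [Finset.erase_eq_of_notMem (fun hmem => hvM (mem_inter.mp hmem).1)]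
          rw [hRS, sum_erase_r hval hS'.1.1 hS'.1.2]
        have h4 : ∑ S' ∈ B, r u S' ≤ c u := sum_r_le_c hd hval hc u hBsub
        have h5 : ∑ S' ∈ B, (R S' - r u S') = (∑ S' ∈ B, R S') - ∑ S' ∈ B, r u S' :=
          sum_sub_distrib _ _
        rw [sum_congr rfl h3, h5] at h2
        nlinarith
      have hD'ueq := hD'u u huv
      rw [hGι] at hD'ueq
      have heq : A * demand d E M' r' u
          = A * demand d E M r u + c v * ∑ S' ∈ B, R S' := by
        rw [hD'ueq, hA]
        field_simp
      have hRB0 : 0 ≤ ∑ S' ∈ B, R S' := sum_nonneg fun S' _ => hR0 S'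
      have hcu0 : 0 ≤ c u := hc u
      calc A * demand d E M' r' u = A * demand d E M r u + c v * ∑ S' ∈ B, R S' := heq
        _ ≤ A * c u + c v * ((a+1) * c u) := by
            have e1 : A * demand d E M r u ≤ A * c u :=
              mul_le_mul_of_nonneg_left hDule (le_of_lt hA0)
            have e2 : c v * ∑ S' ∈ B, R S' ≤ c v * ((a+1) * c u) :=
              mul_le_mul_of_nonneg_left hGB hcv0
            linarith
        _ = c u * (A + (d:ℝ) * c v) := by rw [hda]; ring
    · exact hβ1
  -- lower bound for the fines collected by v after the deviation
  have hFlb : β * c v ≤ Fplus d E c M' r' v := by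
    unfold Fplus
    have hterm : ∀ S ∈ E.filter (fun S => v ∈ S),
        ρ S * β ≤ (r' v S / a) * ∑ u ∈ S.erase v, theta d E c M' r' u := by
      intro S hS
      have hρv : r' v S = ρ S := by rw [hr']; exact if_pos rfl
      rw [hρv]
      have hsumθ : a * β ≤ ∑ u ∈ S.erase v, theta d E c M' r' u := by
        have h1 : ∑ u ∈ S.erase v, β ≤ ∑ u ∈ S.erase v, theta d E c M' r' u :=
          sum_le_sum fun u hu => hθβ S hS u hu
        rw [sum_const, nsmul_eq_mul] at h1
        rw [card_erase_of_unif hd hunif (mem_filter.mp hS).1 (mem_filter.mp hS).2] at h1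
        rw [← ha] at h1
        linarith
      calc ρ S * β = (ρ S / a) * (a * β) := by field_simp
        _ ≤ (ρ S / a) * ∑ u ∈ S.erase v, theta d E c M' r' u :=
            mul_le_mul_of_nonneg_left hsumθ (div_nonneg (hρ0 S) (le_of_lt ha0))
    calc β * c v = ∑ S ∈ E.filter (fun S => v ∈ S), ρ S * β := by
          rw [← sum_mul, hsumρ]; ring
      _ ≤ ∑ S ∈ E.filter (fun S => v ∈ S),
            (r' v S / a) * ∑ u ∈ S.erase v, theta d E c M' r' u := sum_le_sum hterm
      _ = ∑ S ∈ E.filter (fun S => v ∈ S),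
            (r' v S / ((d:ℝ) - 1)) * ∑ u ∈ S.erase v, theta d E c M' r' u := by rw [ha]
  -- combine and derive the contradiction
  have hFub : Fplus d E c M' r' v ≤ 2 * c v - x := by linarith
  have hmain : A * c v ≤ (2 * c v - x) * (A + (d:ℝ) * c v) := by
    have h1 : β * c v ≤ 2 * c v - x := le_trans hFlb hFub
    rw [hβ] at h1
    have h2 : A / (A + (d:ℝ) * c v) * c v * (A + (d:ℝ) * c v)
        ≤ (2 * c v - x) * (A + (d:ℝ) * c v) :=
      mul_le_mul_of_nonneg_right h1 (le_of_lt hden)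
    calc A * c v = A / (A + (d:ℝ) * c v) * c v * (A + (d:ℝ) * c v) := by
          field_simp
      _ ≤ (2 * c v - x) * (A + (d:ℝ) * c v) := h2
  -- polynomial contradiction
  set y : ℝ := c v with hy
  have hcony : (a + 1) * y < a * x := by rw [← hda]; linarith
  have H1 : 0 < a * x - (a+1) * y := by linarith
  have hint1 : 0 < a * ((a * x - (a+1)*y) * x) :=
    mul_pos ha0 (mul_pos H1 hx0)
  have hint2 : 0 ≤ (a * x - (a+1)*y) * y := mul_nonneg (le_of_lt H1) hcv0
  have hint3 : 0 ≤ x * y := mul_nonneg (le_of_lt hx0) hcv0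
  rw [hA, hda] at hmain
  nlinarith [hmain, hint1, hint2, hint3]

end Aux


set_option maxHeartbeats 2000000 in
/-- in any pure Nash equilibrium `(M, r)` of the Mafia Hitting Set Game,
`M` is a hitting set and its cost is at most `d` times the cost of any hitting set
(price of anarchy at most `d`). -/
theorem stmt_15 (d : ℕ) (hd : 2 ≤ d) (E : Finset (Finset V))
    (hunif : ∀ S ∈ E, S.card = d)
    (c : V → ℝ) (hc : ∀ v, 0 ≤ c v) (T : ℝ) (hT : 2 * ∑ v, c v < T)
    (M : Finset V) (r : V → Finset V → ℝ)
    (hnash : IsNashEq d E c T M r) :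
    (∀ S ∈ E, (M ∩ S).Nonempty) ∧
      ∀ Mstar : Finset V, (∀ S ∈ E, (Mstar ∩ S).Nonempty) →
        ∑ v ∈ M, c v ≤ d * ∑ v ∈ Mstar, c v := by
  have hval := hnash.1
  have hhit := nash_hitting hd hunif hc hT hnash
  refine ⟨hhit, ?_⟩
  intro Mstar hMstar
  have hnop := no_protected hd hunif hc hT hnash
  have hciv := civilian_bound hd hunif hc hT hnash
  have ha0 : (0:ℝ) < (d:ℝ) - 1 := dpos hd
  rcases E.eq_empty_or_nonempty with hE | hE
  · have h0 : ∑ v ∈ M, c v = 0 := by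
      rw [sum_c_eq hval, hE, sum_empty]
    rw [h0]
    exact mul_nonneg (Nat.cast_nonneg d) (sum_nonneg fun v _ => hc v)
  · obtain ⟨S₁, hS₁⟩ := hE
    have hS₁ne : S₁.Nonempty := Finset.card_pos.mp (by rw [hunif S₁ hS₁]; omega)
    have hV : Nonempty V := ⟨hS₁ne.choose⟩
    set sel : Finset V → V :=
      fun S => if h : (Mstar ∩ S).Nonempty then h.choose else Classical.arbitrary V
      with hsel
    have hselMstar : ∀ S ∈ E, sel S ∈ Mstar := by
      intro S hS
      rw [hsel]
      dsimp only
      rw [dif_pos (hMstar S hS)]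
      exact (mem_inter.mp (hMstar S hS).choose_spec).1
    have hselS : ∀ S ∈ E, sel S ∈ S := by
      intro S hS
      rw [hsel]
      dsimp only
      rw [dif_pos (hMstar S hS)]
      exact (mem_inter.mp (hMstar S hS).choose_spec).2
    have hperw : ∀ w ∈ Mstar,
        ∑ S ∈ E.filter (fun S => sel S = w),
          (r (sel S) S + ∑ m ∈ (M ∩ S).erase (sel S), r m S) ≤ (d:ℝ) * c w := by
      intro w hw
      have hfibsub : E.filter (fun S => sel S = w) ⊆ E.filter (fun S => w ∈ S) := by
        intro S hS
        simp only [mem_filter] at hS ⊢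
        exact ⟨hS.1, hS.2 ▸ hselS S hS.1⟩
      have hrw : ∀ S ∈ E.filter (fun S => sel S = w),
          r (sel S) S + ∑ m ∈ (M ∩ S).erase (sel S), r m S
            = r w S + ∑ m ∈ (M ∩ S).erase w, r m S := by
        intro S hS
        rw [(mem_filter.mp hS).2]
      rw [sum_congr rfl hrw, sum_add_distrib]
      have bound1 : ∑ S ∈ E.filter (fun S => sel S = w), r w S
          ≤ (if w ∈ M then c w else 0) := by
        by_cases hwM : w ∈ M
        · rw [if_pos hwM]
          exact sum_r_le_c hd hval hc w hfibsub
        · rw [if_neg hwM]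
          rw [sum_congr rfl (fun S _ => hval.2.1 w S (Or.inl hwM))]
          simp
      have bound2 : ∑ S ∈ E.filter (fun S => sel S = w),
          ∑ m ∈ (M ∩ S).erase w, r m S ≤ ((d:ℝ) - 1) * demand d E M r w := by
        have hDw : ((d:ℝ) - 1) * demand d E M r w
            = ∑ S ∈ E.filter (fun S => w ∈ S), ∑ m ∈ (M ∩ S).erase w, r m S := by
          have : demand d E M r w = (1/((d:ℝ)-1))
              * ∑ S ∈ E.filter (fun S => w ∈ S), ∑ m ∈ (M ∩ S).erase w, r m S := rfl
          rw [this]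
          field_simp
        rw [hDw]
        exact sum_le_sum_of_subset_of_nonneg hfibsub
          (fun S _ _ => sum_nonneg fun m _ => hval.1 m S)
      have final : (if w ∈ M then c w else 0) + ((d:ℝ) - 1) * demand d E M r w
          ≤ (d:ℝ) * c w := by
        by_cases hwM : w ∈ M
        · rw [if_pos hwM]
          have h1 : demand d E M r w ≤ c w := hnop w hwM
          have h2 : ((d:ℝ) - 1) * demand d E M r w ≤ ((d:ℝ) - 1) * c w :=
            mul_le_mul_of_nonneg_left h1 (le_of_lt ha0)
          linarith
        · rw [if_neg hwM]
          have h1 := hciv w hwM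
          linarith
      linarith
    calc ∑ v ∈ M, c v = ∑ S ∈ E, ∑ m ∈ M ∩ S, r m S := sum_c_eq hval
      _ ≤ ∑ S ∈ E, (r (sel S) S + ∑ m ∈ (M ∩ S).erase (sel S), r m S) := by
          refine sum_le_sum fun S hS => ?_
          by_cases hselM : sel S ∈ M ∩ S
          · exact le_of_eq (Finset.add_sum_erase _ _ hselM).symm
          · rw [Finset.erase_eq_of_notMem hselM]
            have := hval.1 (sel S) S
            linarith
      _ = ∑ w ∈ Mstar, ∑ S ∈ E.filter (fun S => sel S = w),
            (r (sel S) S + ∑ m ∈ (M ∩ S).erase (sel S), r m S) :=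
          (Finset.sum_fiberwise_of_maps_to hselMstar _).symm
      _ ≤ ∑ w ∈ Mstar, (d:ℝ) * c w := sum_le_sum hperw
      _ = (d:ℝ) * ∑ v ∈ Mstar, c v := by rw [mul_sum]


end
end MafiaHS
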